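/- Let N ≥ 1, m ≥ 3 and 1 ≤ k ≤ m−2 be integers, let ν = (ν_1,…,ν_N) ∈ ℕ^N satisfy ∑_{i=1}^N ν_i = N, and let b_1 ≥ b_2 ≥ ⋯ ≥ b_k ≥ 1 be integers with b_1 + ⋯ + b_k = m. Then, as an inequality of real numbers, the sum over all tuples (i_1,…,i_k) of pairwise distinct indices in {1,…,N} of ∏_{l=1}^k (ν_{i_l})_{b_l} is at most ∑_{i=1}^N (ν_i)_2 · { (m−2) ν_i N^{m−3} + C(m−2, 2) · N^{m−4} · ∑_{j≠i} ν_j² }, where C(·,·) denotes the binomial coefficient. -/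

import Mathlib

open Finset

/-- The real falling factorial `(x)_b = x (x-1) ⋯ (x-b+1)`. -/
noncomputable def fallingFact (x : ℝ) (b : ℕ) : ℝ := ∏ j ∈ Finset.range b, (x - j)

lemma ff_nonneg (n b : ℕ) : 0 ≤ fallingFact n b := by
  rcases le_or_gt b n with h | h
  · apply Finset.prod_nonneg
    intro j hj
    simp only [Finset.mem_range] at hj
    have : (j:ℝ) ≤ n := by exact_mod_cast (hj.trans_le h).le
    linarith
  · apply le_of_eq
    exact (Finset.prod_eq_zero (Finset.mem_range.mpr h) (by simp)).symm

lemma ff_le_pow (n b : ℕ) : fallingFact n b ≤ (n:ℝ)^b := by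
  rcases le_or_gt b n with h | h
  · calc fallingFact n b ≤ ∏ j ∈ Finset.range b, (n:ℝ) := by
          apply Finset.prod_le_prod
          · intro j hj
            simp only [Finset.mem_range] at hj
            have : (j:ℝ) ≤ n := by exact_mod_cast (hj.trans_le h).le
            linarith
          · intro j _; linarith [Nat.cast_nonneg (α := ℝ) j]
      _ = (n:ℝ)^b := by simp
  · rw [show fallingFact n b = 0 from Finset.prod_eq_zero (Finset.mem_range.mpr h) (by simp)]
    positivity

lemma ff_le_two (n b : ℕ) (hb : 2 ≤ b) :
    fallingFact n b ≤ (n:ℝ) * ((n:ℝ) - 1) * (n:ℝ)^(b-2) := by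
  have hnn : 0 ≤ (n:ℝ) * ((n:ℝ) - 1) := by
    rcases Nat.eq_zero_or_pos n with h | h
    · simp [h]
    · have : (1:ℝ) ≤ n := by exact_mod_cast h
      nlinarith
  rcases le_or_gt b n with h | h
  · have hsplit : fallingFact n b
        = (∏ j ∈ Finset.range 2, ((n:ℝ) - j)) * ∏ j ∈ Finset.Ico 2 b, ((n:ℝ) - j) := by
      rw [fallingFact, Finset.range_eq_Ico,
        ← Finset.prod_Ico_consecutive _ (Nat.zero_le 2) hb, Finset.range_eq_Ico]
    rw [hsplit]
    have h2 : ∏ j ∈ Finset.range 2, ((n:ℝ) - j) = (n:ℝ) * ((n:ℝ) - 1) := by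
      simp [Finset.prod_range_succ]
    rw [h2]
    apply mul_le_mul_of_nonneg_left _ hnn
    calc ∏ j ∈ Finset.Ico 2 b, ((n:ℝ) - j) ≤ ∏ j ∈ Finset.Ico 2 b, (n:ℝ) := by
          apply Finset.prod_le_prod
          · intro j hj
            have := (Finset.mem_Ico.mp hj).2
            have : (j:ℝ) ≤ n := by exact_mod_cast (this.trans_le h).le
            linarith
          · intro j _; linarith [Nat.cast_nonneg (α := ℝ) j]
      _ = (n:ℝ)^(b-2) := by rw [Finset.prod_const, Nat.card_Ico]
  · rw [show fallingFact n b = 0 from Finset.prod_eq_zero (Finset.mem_range.mpr h) (by simp)]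
    positivity

lemma peel_lemma (n k : ℕ) (f : Fin (k+1) → Fin n → ℝ) (hf : ∀ l x, 0 ≤ f l x) :
    ∑ i ∈ univ.filter (fun i : Fin (k+1) → Fin n => Function.Injective i), ∏ l, f l (i l)
    ≤ (∑ i ∈ univ.filter (fun i : Fin k → Fin n => Function.Injective i),
        ∏ l, f l.castSucc (i l)) * ∑ x, f (Fin.last k) x := by
  rw [Finset.sum_mul_sum]
  rw [← Finset.sum_product']
  set e : (Fin (k+1) → Fin n) → (Fin k → Fin n) × Fin n :=
    fun i => (i ∘ Fin.castSucc, i (Fin.last k)) with he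
  set G : (Fin k → Fin n) × Fin n → ℝ :=
    fun p => (∏ l, f l.castSucc (p.1 l)) * f (Fin.last k) p.2 with hG
  have hinj : Function.Injective e := by
    intro i i' h
    simp only [he, Prod.mk.injEq] at h
    funext l
    induction l using Fin.lastCases with
    | last => exact h.2
    | cast j => exact congrFun h.1 j
  have step1 : ∑ i ∈ univ.filter (fun i : Fin (k+1) → Fin n => Function.Injective i),
      ∏ l, f l (i l)
      = ∑ p ∈ (univ.filter (fun i : Fin (k+1) → Fin n => Function.Injective i)).image e, G p := by
    rw [Finset.sum_image (fun a _ b _ h => hinj h)]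
    apply Finset.sum_congr rfl
    intro i _
    rw [hG]
    simp only [he]
    rw [Fin.prod_univ_castSucc]
    rfl
  rw [step1]
  apply Finset.sum_le_sum_of_subset_of_nonneg
  · intro p hp
    simp only [Finset.mem_image, Finset.mem_filter, Finset.mem_univ, true_and] at hp ⊢
    obtain ⟨i, hi, rfl⟩ := hp
    refine Finset.mk_mem_product ?_ (Finset.mem_univ _)
    simp only [Finset.mem_filter, Finset.mem_univ, true_and]
    exact hi.comp (Fin.castSucc_injective k)
  · intro p _ _
    exact mul_nonneg (Finset.prod_nonneg fun l _ => hf _ _) (hf _ _)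

lemma lemA (n : ℕ) : ∀ (k : ℕ) (f : Fin (k+1) → Fin n → ℝ), (∀ l x, 0 ≤ f l x) →
    ∑ i ∈ univ.filter (fun i : Fin (k+1) → Fin n => Function.Injective i), ∏ l, f l (i l)
    ≤ (∑ x, f 0 x) * ∏ l : Fin k, ∑ x, f l.succ x := by
  intro k
  induction k with
  | zero =>
    intro f hf
    have : (univ.filter (fun i : Fin 1 → Fin n => Function.Injective i)) = univ := by
      apply Finset.filter_true_of_mem
      intro i _
      intro a b _
      exact Subsingleton.elim a b
    rw [this]
    simp only [Fin.prod_univ_succ, Fin.prod_univ_zero, mul_one]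
    rw [← Equiv.sum_comp (Equiv.funUnique (Fin 1) (Fin n)).symm (fun i => f 0 (i 0))]
    simp
  | succ k ih =>
    intro f hf
    calc _ ≤ (∑ i ∈ univ.filter (fun i : Fin (k+1) → Fin n => Function.Injective i),
            ∏ l, f l.castSucc (i l)) * ∑ x, f (Fin.last (k+1)) x := peel_lemma n (k+1) f hf
      _ ≤ ((∑ x, f 0 x) * ∏ l : Fin k, ∑ x, f l.succ.castSucc x) * ∑ x, f (Fin.last (k+1)) x := by
          apply mul_le_mul_of_nonneg_right
          · have := ih (fun l => f l.castSucc) (fun l x => hf _ _)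
            simpa using this
          · exact Finset.sum_nonneg fun x _ => hf _ _
      _ = (∑ x, f 0 x) * ∏ l : Fin (k+1), ∑ x, f l.succ x := by
          rw [Fin.prod_univ_castSucc, Fin.succ_last, ← mul_assoc]
          congr 2

lemma lemB (n : ℕ) : ∀ (k : ℕ) (f : Fin (k+2) → Fin n → ℝ), (∀ l x, 0 ≤ f l x) →
    ∑ i ∈ univ.filter (fun i : Fin (k+2) → Fin n => Function.Injective i), ∏ l, f l (i l)
    ≤ (∑ x, ∑ y ∈ univ.erase x, f 0 x * f 1 y) * ∏ l : Fin k, ∑ x, f l.succ.succ x := by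
  intro k
  induction k with
  | zero =>
    intro f hf
    simp only [Fin.prod_univ_two, Finset.univ_eq_empty, Finset.prod_empty, mul_one,
      Fin.prod_univ_succ, Fin.prod_univ_zero]
    rw [Finset.sum_sigma']
    apply le_of_eq
    apply Finset.sum_nbij' (i := fun i : Fin 2 → Fin n => (⟨i 0, i 1⟩ : Σ _ : Fin n, Fin n))
      (j := fun p => ![p.1, p.2])
    · intro a ha
      simp only [Finset.mem_filter, Finset.mem_univ, true_and] at ha
      simp only [Finset.mem_sigma, Finset.mem_univ, true_and, Finset.mem_erase, and_true]
      exact fun h => absurd (ha h) (by decide)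
    · intro p hp
      simp only [Finset.mem_sigma, Finset.mem_univ, true_and, Finset.mem_erase] at hp
      simp only [Finset.mem_filter, Finset.mem_univ, true_and]
      intro u v huv
      fin_cases u <;> fin_cases v <;> simp_all
    · intro a ha
      funext l
      fin_cases l <;> simp
    · intro p hp; rfl
    · intro a ha; rfl
  | succ k ih =>
    intro f hf
    calc _ ≤ (∑ i ∈ univ.filter (fun i : Fin (k+2) → Fin n => Function.Injective i),
            ∏ l, f l.castSucc (i l)) * ∑ x, f (Fin.last (k+2)) x := peel_lemma n (k+2) f hf
      _ ≤ ((∑ x, ∑ y ∈ univ.erase x, f 0 x * f 1 y) *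
            ∏ l : Fin k, ∑ x, f l.succ.succ.castSucc x) * ∑ x, f (Fin.last (k+2)) x := by
          apply mul_le_mul_of_nonneg_right
          · have := ih (fun l => f l.castSucc) (fun l x => hf _ _)
            simpa using this
          · exact Finset.sum_nonneg fun x _ => hf _ _
      _ = (∑ x, ∑ y ∈ univ.erase x, f 0 x * f 1 y) * ∏ l : Fin (k+1), ∑ x, f l.succ.succ x := by
          rw [Fin.prod_univ_castSucc, Fin.succ_last, Fin.succ_last, ← mul_assoc]
          congr 2

theorem multiple_merger_sum_le (N m k : ℕ) (hN : 1 ≤ N) (hm : 3 ≤ m)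
    (hk1 : 1 ≤ k) (hk2 : k ≤ m - 2)
    (ν : Fin N → ℕ) (hsum : ∑ i, ν i = N)
    (b : Fin k → ℕ) (hmono : ∀ l l' : Fin k, l ≤ l' → b l' ≤ b l)
    (hb1 : ∀ l, 1 ≤ b l) (hbsum : ∑ l, b l = m) :
    ∑ i ∈ Finset.univ.filter (fun i : Fin k → Fin N => Function.Injective i),
        ∏ l, fallingFact (ν (i l) : ℝ) (b l) ≤
      ∑ i : Fin N, (ν i : ℝ) * ((ν i : ℝ) - 1) *
        (((m : ℝ) - 2) * (ν i : ℝ) * (N : ℝ) ^ ((m : ℤ) - 3) +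
          ((m - 2).choose 2 : ℝ) * (N : ℝ) ^ ((m : ℤ) - 4) *
            ∑ j ∈ Finset.univ.erase i, (ν j : ℝ) ^ 2) := by
  obtain ⟨k', rfl⟩ : ∃ k', k = k' + 1 := ⟨k - 1, by omega⟩
  have hNpos : (0:ℝ) < N := by exact_mod_cast hN
  have hνN : ∀ x, (ν x : ℝ) ≤ N := by
    intro x
    have : ν x ≤ N := by
      calc ν x ≤ ∑ i, ν i := Finset.single_le_sum (fun i _ => Nat.zero_le _) (Finset.mem_univ x)
        _ = N := hsum
    exact_mod_cast this
  have hnn : ∀ t : ℕ, (0:ℝ) ≤ (t:ℝ) * ((t:ℝ) - 1) := by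
    intro t
    rcases Nat.eq_zero_or_pos t with h | h
    · simp [h]
    · have : (1:ℝ) ≤ t := by exact_mod_cast h
      nlinarith
  have hsumR : ∑ x, (ν x : ℝ) = N := by
    rw [← Nat.cast_sum, hsum]
  have sum_ff_le : ∀ c : ℕ, 1 ≤ c → ∑ x, fallingFact (ν x) c ≤ (N:ℝ)^c := by
    intro c hc
    calc ∑ x, fallingFact (ν x) c ≤ ∑ x, (ν x:ℝ) * (N:ℝ)^(c-1) := by
          apply Finset.sum_le_sum; intro x _
          calc fallingFact (ν x) c ≤ (ν x:ℝ)^c := ff_le_pow _ _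
            _ = (ν x:ℝ) * (ν x:ℝ)^(c-1) := by
                rw [← pow_succ']; congr 1; omega
            _ ≤ (ν x:ℝ) * (N:ℝ)^(c-1) := by
                apply mul_le_mul_of_nonneg_left
                  (pow_le_pow_left₀ (by positivity) (hνN x) _) (by positivity)
      _ = (N:ℝ) * (N:ℝ)^(c-1) := by rw [← Finset.sum_mul, hsumR]
      _ = (N:ℝ)^c := by rw [← pow_succ']; congr 1; omega
  have hb0 : 2 ≤ b 0 := by
    by_contra h
    have hall : ∀ l, b l = 1 := by
      intro l
      have h1 := hmono 0 l (Fin.zero_le l)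
      have h2 := hb1 l
      omega
    have : ∑ l, b l = k' + 1 := by
      simp [hall]
    omega
  have hsecond_nonneg : ∀ x : Fin N,
      (0:ℝ) ≤ ((m - 2).choose 2 : ℝ) * (N : ℝ) ^ ((m : ℤ) - 4) *
        ∑ j ∈ Finset.univ.erase x, (ν j : ℝ) ^ 2 := by
    intro x
    apply mul_nonneg (mul_nonneg (Nat.cast_nonneg _) (zpow_nonneg hNpos.le _))
      (Finset.sum_nonneg fun _ _ => sq_nonneg _)
  by_cases hone : ∀ l : Fin k', b l.succ = 1
  · -- Case I: all parts except the first are 1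
    have hsum' : b 0 + k' = m := by
      have h := hbsum
      rw [Fin.sum_univ_succ] at h
      have : ∑ l : Fin k', b l.succ = k' := by simp [hone]
      omega
    have hb03 : 3 ≤ b 0 := by omega
    have key := lemA N k' (fun l x => fallingFact (ν x) (b l)) (fun l x => ff_nonneg _ _)
    have hprod : ∏ l : Fin k', ∑ x, fallingFact (ν x) (b (Fin.succ l)) = (N:ℝ)^k' := by
      have heach : ∀ l : Fin k', ∑ x, fallingFact (ν x) (b (Fin.succ l)) = (N:ℝ) := by
        intro l
        rw [hone l]
        have : ∀ x : Fin N, fallingFact (ν x) 1 = (ν x : ℝ) := by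
          intro x; simp [fallingFact]
        rw [Finset.sum_congr rfl (fun x _ => this x), hsumR]
      rw [Finset.prod_congr rfl (fun l _ => heach l), Finset.prod_const, Finset.card_univ,
        Fintype.card_fin]
    rw [hprod] at key
    have hzpow3 : (N : ℝ) ^ ((m : ℤ) - 3) = (N:ℝ)^(m - 3 : ℕ) := by
      rw [show (m:ℤ) - 3 = ((m - 3 : ℕ) : ℤ) by omega, zpow_natCast]
    calc ∑ i ∈ Finset.univ.filter (fun i : Fin (k'+1) → Fin N => Function.Injective i),
          ∏ l, fallingFact (ν (i l) : ℝ) (b l)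
        ≤ (∑ x, fallingFact (ν x) (b 0)) * (N:ℝ)^k' := key
      _ ≤ (∑ x, (ν x:ℝ)*((ν x:ℝ)-1)*((ν x:ℝ)*(N:ℝ)^(b 0 - 3))) * (N:ℝ)^k' := by
          apply mul_le_mul_of_nonneg_right _ (by positivity)
          apply Finset.sum_le_sum; intro x _
          calc fallingFact (ν x) (b 0) ≤ (ν x:ℝ)*((ν x:ℝ)-1)*(ν x:ℝ)^(b 0 - 2) :=
                ff_le_two _ _ hb0
            _ = (ν x:ℝ)*((ν x:ℝ)-1)*((ν x:ℝ)*(ν x:ℝ)^(b 0 - 3)) := by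
                rw [← pow_succ']
                congr 2
                omega
            _ ≤ (ν x:ℝ)*((ν x:ℝ)-1)*((ν x:ℝ)*(N:ℝ)^(b 0 - 3)) := by
                apply mul_le_mul_of_nonneg_left _ (hnn _)
                exact mul_le_mul_of_nonneg_left
                  (pow_le_pow_left₀ (by positivity) (hνN x) _) (by positivity)
      _ = ∑ x, (ν x:ℝ)*((ν x:ℝ)-1)*((ν x:ℝ)*(N:ℝ)^(m - 3 : ℕ)) := by
          rw [Finset.sum_mul]
          apply Finset.sum_congr rfl
          intro x _
          rw [show (m - 3 : ℕ) = (b 0 - 3) + k' by omega, pow_add]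
          ring
      _ ≤ _ := by
          apply Finset.sum_le_sum
          intro x _
          apply mul_le_mul_of_nonneg_left _ (hnn (ν x))
          rw [hzpow3]
          have ht : (0:ℝ) ≤ (ν x:ℝ) * (N:ℝ)^(m-3:ℕ) := by positivity
          have hm2 : (1:ℝ) ≤ (m:ℝ) - 2 := by
            have : (3:ℝ) ≤ m := by exact_mod_cast hm
            linarith
          have h1 : (ν x:ℝ) * (N:ℝ)^(m-3:ℕ) ≤ ((m:ℝ) - 2) * ((ν x:ℝ) * (N:ℝ)^(m-3:ℕ)) :=
            le_mul_of_one_le_left ht hm2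
          have h2 := hsecond_nonneg x
          rw [← mul_assoc] at h1
          linarith
  · -- Case II: some later part is ≥ 2
    push_neg at hone
    obtain ⟨l₀, hl₀⟩ := hone
    obtain ⟨k'', rfl⟩ : ∃ k'', k' = k'' + 1 := ⟨k' - 1, by have := l₀.pos; omega⟩
    have hb1' : 2 ≤ b 1 := by
      have h2 : 2 ≤ b l₀.succ := by have := hb1 l₀.succ; omega
      have hle : (1 : Fin (k''+2)) ≤ l₀.succ := by
        rw [Fin.le_def]
        simp [Fin.val_one]
      exact le_trans h2 (hmono 1 l₀.succ hle)
    set s := ∑ l : Fin k'', b l.succ.succ with hs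
    have hsum2 : b 0 + b 1 + s = m := by
      have h := hbsum
      rw [Fin.sum_univ_succ, Fin.sum_univ_succ] at h
      simp only [Fin.succ_zero_eq_one] at h
      omega
    have hspos : ∀ l : Fin k'', 1 ≤ b l.succ.succ := fun l => hb1 _
    have hm4 : 4 ≤ m := by
      have : 0 ≤ s := Nat.zero_le s
      omega
    have key := lemB N k'' (fun l x => fallingFact (ν x) (b l)) (fun l x => ff_nonneg _ _)
    have hprodle : ∏ l : Fin k'', ∑ x, fallingFact (ν x) (b l.succ.succ) ≤ (N:ℝ)^s := by
      calc ∏ l : Fin k'', ∑ x, fallingFact (ν x) (b l.succ.succ)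
          ≤ ∏ l : Fin k'', (N:ℝ)^(b l.succ.succ) := by
            apply Finset.prod_le_prod
            · intro l _
              exact Finset.sum_nonneg fun x _ => ff_nonneg _ _
            · intro l _
              exact sum_ff_le _ (hb1 _)
        _ = (N:ℝ)^s := by rw [hs, ← Finset.prod_pow_eq_pow_sum]
    have hzpow4 : (N : ℝ) ^ ((m : ℤ) - 4) = (N:ℝ)^(m - 4 : ℕ) := by
      rw [show (m:ℤ) - 4 = ((m - 4 : ℕ) : ℤ) by omega, zpow_natCast]
    have hdouble : ∑ x, ∑ y ∈ univ.erase x, fallingFact (ν x) (b 0) * fallingFact (ν y) (b 1)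
        ≤ ∑ x, (ν x:ℝ)*((ν x:ℝ)-1) * ((N:ℝ)^(b 0 - 2) * (N:ℝ)^(b 1 - 2)) *
            ∑ y ∈ univ.erase x, (ν y:ℝ)^2 := by
      apply Finset.sum_le_sum
      intro x _
      calc ∑ y ∈ univ.erase x, fallingFact (ν x) (b 0) * fallingFact (ν y) (b 1)
          ≤ ∑ y ∈ univ.erase x,
              ((ν x:ℝ)*((ν x:ℝ)-1)*(N:ℝ)^(b 0 - 2)) * ((ν y:ℝ)^2 * (N:ℝ)^(b 1 - 2)) := by
            apply Finset.sum_le_sum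
            intro y _
            apply mul_le_mul
            · calc fallingFact (ν x) (b 0) ≤ (ν x:ℝ)*((ν x:ℝ)-1)*(ν x:ℝ)^(b 0 - 2) :=
                    ff_le_two _ _ hb0
                _ ≤ (ν x:ℝ)*((ν x:ℝ)-1)*(N:ℝ)^(b 0 - 2) :=
                    mul_le_mul_of_nonneg_left
                      (pow_le_pow_left₀ (by positivity) (hνN x) _) (hnn _)
            · calc fallingFact (ν y) (b 1) ≤ (ν y:ℝ)^(b 1) := ff_le_pow _ _
                _ = (ν y:ℝ)^2 * (ν y:ℝ)^(b 1 - 2) := by rw [← pow_add]; congr 1; omega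
                _ ≤ (ν y:ℝ)^2 * (N:ℝ)^(b 1 - 2) :=
                    mul_le_mul_of_nonneg_left
                      (pow_le_pow_left₀ (by positivity) (hνN y) _) (by positivity)
            · exact ff_nonneg _ _
            · exact mul_nonneg (hnn (ν x)) (by positivity)
        _ = (ν x:ℝ)*((ν x:ℝ)-1) * ((N:ℝ)^(b 0 - 2) * (N:ℝ)^(b 1 - 2)) *
              ∑ y ∈ univ.erase x, (ν y:ℝ)^2 := by
            rw [Finset.mul_sum]
            apply Finset.sum_congr rfl
            intro y _
            ring
    calc ∑ i ∈ Finset.univ.filter (fun i : Fin (k''+2) → Fin N => Function.Injective i),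
          ∏ l, fallingFact (ν (i l) : ℝ) (b l)
        ≤ (∑ x, ∑ y ∈ univ.erase x, fallingFact (ν x) (b 0) * fallingFact (ν y) (b 1)) *
            ∏ l : Fin k'', ∑ x, fallingFact (ν x) (b l.succ.succ) := key
      _ ≤ (∑ x, (ν x:ℝ)*((ν x:ℝ)-1) * ((N:ℝ)^(b 0 - 2) * (N:ℝ)^(b 1 - 2)) *
              ∑ y ∈ univ.erase x, (ν y:ℝ)^2) * (N:ℝ)^s := by
          apply mul_le_mul hdouble hprodle
          · exact Finset.prod_nonneg fun l _ => Finset.sum_nonneg fun x _ => ff_nonneg _ _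
          · apply Finset.sum_nonneg
            intro x _
            exact mul_nonneg (mul_nonneg (hnn (ν x)) (by positivity))
              (Finset.sum_nonneg fun _ _ => sq_nonneg _)
      _ = ∑ x, (ν x:ℝ)*((ν x:ℝ)-1) * ((N:ℝ)^(m - 4 : ℕ) *
              ∑ y ∈ univ.erase x, (ν y:ℝ)^2) := by
          rw [Finset.sum_mul]
          apply Finset.sum_congr rfl
          intro x _
          rw [show (ν x:ℝ)*((ν x:ℝ)-1) * ((N:ℝ)^(b 0 - 2) * (N:ℝ)^(b 1 - 2)) *
              (∑ y ∈ univ.erase x, (ν y:ℝ)^2) * (N:ℝ)^s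
              = (ν x:ℝ)*((ν x:ℝ)-1) * (((N:ℝ)^(b 0 - 2) * (N:ℝ)^(b 1 - 2) * (N:ℝ)^s) *
                ∑ y ∈ univ.erase x, (ν y:ℝ)^2) by ring]
          rw [show (m - 4 : ℕ) = (b 0 - 2) + (b 1 - 2) + s by omega, pow_add, pow_add]
      _ ≤ _ := by
          apply Finset.sum_le_sum
          intro x _
          apply mul_le_mul_of_nonneg_left _ (hnn _)
          rw [hzpow4]
          set t : ℝ := (N:ℝ)^(m - 4 : ℕ) * ∑ y ∈ univ.erase x, (ν y:ℝ)^2 with htdef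
          have htnn : 0 ≤ t := by
            apply mul_nonneg (by positivity) (Finset.sum_nonneg fun _ _ => sq_nonneg _)
          have hC : (1:ℝ) ≤ ((m - 2).choose 2 : ℝ) := by
            have : 0 < (m - 2).choose 2 := Nat.choose_pos (by omega)
            exact_mod_cast this
          have hT1 : (0:ℝ) ≤ ((m : ℝ) - 2) * (ν x : ℝ) * (N : ℝ) ^ ((m : ℤ) - 3) := by
            apply mul_nonneg (mul_nonneg _ (Nat.cast_nonneg _)) (zpow_nonneg hNpos.le _)
            have : (3:ℝ) ≤ m := by exact_mod_cast hm
            linarith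
          have h1 : t ≤ ((m - 2).choose 2 : ℝ) * t := le_mul_of_one_le_left htnn hC
          rw [htdef, ← mul_assoc] at h1
          linarith
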